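/- Let Q = q_1 q_2 ... q_{m+r} be a word in the alphabet {E, N}. Define matroids M^0, M^1, ..., M^{m+r} by: M^0 is the empty matroid, and M^i = M^{i-1} + i (free extension by element i) if q_i = E, while M^i = M^{i-1} ⊕ i (add i as an isthmus) if q_i = N. Then M^{m+r} equals the generalized Catalan matroid M[Q], the lattice path matroid with upper path Q and lower path E^m N^r. -/

import Mathlib

/-- `X` is a partial transversal of the interval system `(N_j = [lo j, hi j])_{j : Fin r}`. -/
def IsPT (r : ℕ) (lo hi : Fin r → ℕ) (X : Finset ℕ) : Prop :=
  ∃ f : X → Fin r, Function.Injective f ∧ ∀ x : X, lo (f x) ≤ (x : ℕ) ∧ (x : ℕ) ≤ hi (f x)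

/-- The rank of an independence system: the supremum of the cardinalities of its
independent sets. -/
noncomputable def rankOf (Ind : Finset ℕ → Prop) : ℕ :=
  sSup {c : ℕ | ∃ I : Finset ℕ, Ind I ∧ I.card = c}

/-- Independent sets of the free extension `M + e`: sets not containing `e` that were
independent, together with sets `I ∪ {e}` with `I` independent of size `< r(M)`. -/
def freeExtInd (Ind : Finset ℕ → Prop) (e : ℕ) : Finset ℕ → Prop := fun I =>
  (e ∉ I ∧ Ind I) ∨ (e ∈ I ∧ Ind (I.erase e) ∧ (I.erase e).card < rankOf Ind)

/-- Independent sets of `M ⊕ e` (adding `e` as an isthmus, i.e. direct sum with the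
one-element rank-one matroid `U_{1,1}` on `{e}`): `I` is independent iff `I - e` is
independent in `M`. -/
def addIsthmusInd (Ind : Finset ℕ → Prop) (e : ℕ) : Finset ℕ → Prop := fun I =>
  Ind (I.erase e)

/-- The recursively constructed independence systems `M^0, M^1, ...` of
Theorem `thm:catrec`: `M^0` is the empty matroid, and `M^i` is the free extension
of `M^{i-1}` by `i` if the `i`-th letter of `Q` is `E` (`q i = false`), or `M^{i-1}`
plus the isthmus `i` if it is `N` (`q i = true`). -/
noncomputable def indSeq (q : ℕ → Bool) : ℕ → (Finset ℕ → Prop)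
  | 0 => fun I => I = ∅
  | (i + 1) =>
      if q (i + 1) then addIsthmusInd (indSeq q i) (i + 1)
      else freeExtInd (indSeq q i) (i + 1)

namespace Cat11


/-- number of `N`'s among positions `1..p` -/
def Ncnt (q : ℕ → Bool) (p : ℕ) : ℕ := ((Finset.Icc 1 p).filter (fun x => q x = true)).card

/-- number of elements of `I` that are `≤ p` -/
def cntI (I : Finset ℕ) (p : ℕ) : ℕ := (I.filter (fun x => x ≤ p)).card

lemma Ncnt_mono (q : ℕ → Bool) {p p' : ℕ} (h : p ≤ p') : Ncnt q p ≤ Ncnt q p' :=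
  Finset.card_le_card (Finset.filter_subset_filter _ (Finset.Icc_subset_Icc_right h))

lemma Icc_succ (i : ℕ) : Finset.Icc 1 (i+1) = insert (i+1) (Finset.Icc 1 i) := by
  ext x; simp [Finset.mem_Icc, Finset.mem_insert]; omega

lemma Ncnt_succ (q : ℕ → Bool) (i : ℕ) :
    Ncnt q (i+1) = Ncnt q i + (if q (i+1) = true then 1 else 0) := by
  unfold Ncnt
  rw [Icc_succ, Finset.filter_insert]
  split
  · rw [Finset.card_insert_of_notMem (by simp)]
  · simp

lemma cntI_mono_set {I J : Finset ℕ} (h : I ⊆ J) (p : ℕ) : cntI I p ≤ cntI J p :=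
  Finset.card_le_card (Finset.filter_subset_filter _ h)

lemma cntI_eq_card {I : Finset ℕ} {p : ℕ} (h : ∀ x ∈ I, x ≤ p) : cntI I p = I.card := by
  unfold cntI; rw [Finset.filter_true_of_mem h]



lemma rank_eq (q : ℕ → Bool) (n : ℕ)
    (IH : ∀ I, indSeq q n I ↔ (I ⊆ Finset.Icc 1 n ∧ ∀ p, cntI I p ≤ Ncnt q p)) :
    rankOf (indSeq q n) = Ncnt q n := by
  have hub : ∀ c ∈ {c : ℕ | ∃ I : Finset ℕ, indSeq q n I ∧ I.card = c}, c ≤ Ncnt q n := by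
    rintro c ⟨I, hI, rfl⟩
    obtain ⟨h1, h2⟩ := (IH I).1 hI
    calc I.card = cntI I n := (cntI_eq_card (fun x hx => (Finset.mem_Icc.1 (h1 hx)).2)).symm
    _ ≤ Ncnt q n := h2 n
  have hmem : Ncnt q n ∈ {c : ℕ | ∃ I : Finset ℕ, indSeq q n I ∧ I.card = c} := by
    refine ⟨(Finset.Icc 1 n).filter (fun x => q x = true),
      (IH _).2 ⟨Finset.filter_subset _ _, ?_⟩, rfl⟩
    intro p
    apply Finset.card_le_card
    intro x hx
    simp only [Finset.mem_filter, Finset.mem_Icc] at hx ⊢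
    exact ⟨⟨hx.1.1.1, hx.2⟩, hx.1.2⟩
  exact le_antisymm (csSup_le ⟨_, hmem⟩ hub) (le_csSup ⟨_, hub⟩ hmem)

lemma indSeq_iff (q : ℕ → Bool) : ∀ n (I : Finset ℕ),
    indSeq q n I ↔ (I ⊆ Finset.Icc 1 n ∧ ∀ p, cntI I p ≤ Ncnt q p) := by
  intro n
  induction n with
  | zero =>
      intro I
      simp only [indSeq]
      constructor
      · rintro rfl
        simp [cntI]
      · rintro ⟨h1, -⟩
        simpa using Finset.subset_empty.1 (by simpa using h1)
  | succ i IH =>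
      intro I
      set e := i + 1 with he
      have heIcc : e ∉ Finset.Icc 1 i := by simp [he]
      -- auxiliary facts
      have filter_small : ∀ (J : Finset ℕ) (p : ℕ), p ≤ i →
          J.filter (fun x => x ≤ p) = (J.erase e).filter (fun x => x ≤ p) := by
        intro J p hp
        ext x
        simp only [Finset.mem_filter, Finset.mem_erase]
        constructor
        · rintro ⟨hx, hxp⟩; exact ⟨⟨by omega, hx⟩, hxp⟩
        · rintro ⟨⟨-, hx⟩, hxp⟩; exact ⟨hx, hxp⟩
      have cnt_small : ∀ (p : ℕ), p ≤ i → cntI I p = cntI (I.erase e) p := by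
        intro p hp; unfold cntI; rw [filter_small I p hp]
      have cnt_big : ∀ (p : ℕ), cntI I p ≤ cntI (I.erase e) p + 1 := by
        intro p
        unfold cntI
        calc (I.filter (fun x => x ≤ p)).card
            ≤ (insert e ((I.erase e).filter (fun x => x ≤ p))).card := by
              apply Finset.card_le_card
              intro x hx
              simp only [Finset.mem_filter, Finset.mem_insert, Finset.mem_erase] at hx ⊢
              rcases eq_or_ne x e with h | h
              · exact Or.inl h
              · exact Or.inr ⟨⟨h, hx.1⟩, hx.2⟩
          _ ≤ _ := Finset.card_insert_le _ _
      show (if q e then addIsthmusInd (indSeq q i) e else freeExtInd (indSeq q i) e) I ↔ _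
      by_cases hq : q e = true
      · -- isthmus case
        rw [if_pos hq]
        have hN : Ncnt q e = Ncnt q i + 1 := by rw [he, Ncnt_succ, if_pos hq]
        show indSeq q i (I.erase e) ↔ _
        rw [IH]
        constructor
        · rintro ⟨h1, h2⟩
          constructor
          · intro x hx
            rcases eq_or_ne x e with rfl | hne
            · simp [he, Finset.mem_Icc]
            · have := h1 (Finset.mem_erase.2 ⟨hne, hx⟩)
              simp only [Finset.mem_Icc] at this ⊢
              omega
          · intro p
            rcases le_or_gt p i with hp | hp
            · rw [cnt_small p hp]; exact h2 p
            · have hcard : cntI (I.erase e) p = cntI (I.erase e) i := by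
                unfold cntI
                congr 1
                apply Finset.filter_congr
                intro x hx
                have := (Finset.mem_Icc.1 (h1 hx)).2
                constructor <;> intro <;> omega
              calc cntI I p ≤ cntI (I.erase e) p + 1 := cnt_big p
                _ = cntI (I.erase e) i + 1 := by rw [hcard]
                _ ≤ Ncnt q i + 1 := by have := h2 i; omega
                _ = Ncnt q e := hN.symm
                _ ≤ Ncnt q p := Ncnt_mono q (by omega)
        · rintro ⟨h1, h2⟩
          refine ⟨?_, fun p => le_trans (cntI_mono_set (Finset.erase_subset _ _) p) (h2 p)⟩
          intro x hx
          obtain ⟨hne, hxI⟩ := Finset.mem_erase.1 hx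
          have := Finset.mem_Icc.1 (h1 hxI)
          simp only [Finset.mem_Icc]
          omega
      · -- free extension case
        rw [if_neg hq]
        have hq' : q e = false := by simpa using hq
        have hN : Ncnt q e = Ncnt q i := by rw [he, Ncnt_succ, if_neg (by exact hq)]; ring
        have hrank : rankOf (indSeq q i) = Ncnt q i := rank_eq q i IH
        show (e ∉ I ∧ indSeq q i I) ∨
            (e ∈ I ∧ indSeq q i (I.erase e) ∧ (I.erase e).card < rankOf (indSeq q i)) ↔ _
        rw [hrank]
        constructor
        · rintro (⟨heI, hI⟩ | ⟨heI, hI, hcard⟩)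
          · obtain ⟨h1, h2⟩ := (IH I).1 hI
            exact ⟨h1.trans (Finset.Icc_subset_Icc_right (by omega)), h2⟩
          · obtain ⟨h1, h2⟩ := (IH _).1 hI
            constructor
            · intro x hx
              rcases eq_or_ne x e with rfl | hne
              · simp only [Finset.mem_Icc, he]; omega
              · have := Finset.mem_Icc.1 (h1 (Finset.mem_erase.2 ⟨hne, hx⟩))
                simp only [Finset.mem_Icc]; omega
            · intro p
              rcases le_or_gt p i with hp | hp
              · rw [cnt_small p hp]; exact h2 p
              · have : cntI (I.erase e) p ≤ (I.erase e).card :=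
                  Finset.card_le_card (Finset.filter_subset _ _)
                calc cntI I p ≤ cntI (I.erase e) p + 1 := cnt_big p
                  _ ≤ (I.erase e).card + 1 := by omega
                  _ ≤ Ncnt q i := by omega
                  _ = Ncnt q e := hN.symm
                  _ ≤ Ncnt q p := Ncnt_mono q (by omega)
        · rintro ⟨h1, h2⟩
          by_cases heI : e ∈ I
          · refine Or.inr ⟨heI, (IH _).2 ⟨?_, fun p =>
              le_trans (cntI_mono_set (Finset.erase_subset _ _) p) (h2 p)⟩, ?_⟩
            · intro x hx
              obtain ⟨hne, hxI⟩ := Finset.mem_erase.1 hx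
              have := Finset.mem_Icc.1 (h1 hxI)
              simp only [Finset.mem_Icc]; omega
            · have hcardI : I.card ≤ Ncnt q i := by
                have := h2 e
                rw [cntI_eq_card (fun x hx => (Finset.mem_Icc.1 (h1 hx)).2), hN] at this
                exact this
              have := Finset.card_erase_lt_of_mem heI
              omega
          · refine Or.inl ⟨heI, (IH I).2 ⟨?_, h2⟩⟩
            intro x hx
            have := Finset.mem_Icc.1 (h1 hx)
            have : x ≠ e := fun h => heI (h ▸ hx)
            simp only [Finset.mem_Icc]
            have := Finset.mem_Icc.1 (h1 hx)
            omega



/-- the number of intervals whose left endpoint is `≤ p` -/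
def Kc (r : ℕ) (lo : Fin r → ℕ) (p : ℕ) : ℕ :=
  (Finset.univ.filter (fun j : Fin r => lo j ≤ p)).card

lemma Kc_le (r : ℕ) (lo : Fin r → ℕ) (p : ℕ) : Kc r lo p ≤ r :=
  le_trans (Finset.card_filter_le _ _) (by simp)

lemma Kc_mono (r : ℕ) (lo : Fin r → ℕ) {p p' : ℕ} (h : p ≤ p') : Kc r lo p ≤ Kc r lo p' := by
  apply Finset.card_le_card
  intro j hj
  simp only [Finset.mem_filter, Finset.mem_univ, true_and] at hj ⊢
  omega

lemma lt_Kc_iff {r : ℕ} {lo : Fin r → ℕ} (hmono : StrictMono lo) (p : ℕ) (j : Fin r) :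
    (j:ℕ) < Kc r lo p ↔ lo j ≤ p := by
  constructor
  · intro h
    by_contra hcon
    push_neg at hcon
    have hsub : (Finset.univ.filter (fun a : Fin r => lo a ≤ p)) ⊆ Finset.Iio j := by
      intro a ha
      simp only [Finset.mem_filter, Finset.mem_univ, true_and] at ha
      simp only [Finset.mem_Iio]
      by_contra hge
      push_neg at hge
      exact absurd (le_trans hcon (hmono.monotone hge)) (by omega)
    have := Finset.card_le_card hsub
    rw [Fin.card_Iio] at this
    unfold Kc at h
    omega
  · intro h
    have hsub : Finset.Iic j ⊆ Finset.univ.filter (fun a : Fin r => lo a ≤ p) := by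
      intro a ha
      simp only [Finset.mem_Iic] at ha
      simp only [Finset.mem_filter, Finset.mem_univ, true_and]
      exact le_trans (hmono.monotone ha) h
    have := Finset.card_le_card hsub
    rw [Fin.card_Iic] at this
    unfold Kc
    omega

lemma gap {k : ℕ} (x : Fin k → ℕ) (hx : StrictMono x) :
    ∀ d (t s : Fin k), (s:ℕ) = t + d → x t + d ≤ x s := by
  intro d
  induction d with
  | zero =>
      intro t s h
      have : s = t := Fin.ext (by omega)
      simp [this]
  | succ d ih =>
      intro t s h
      have hs : (t:ℕ) + d < k := by have := s.isLt; omega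
      have h1 := ih t ⟨(t:ℕ) + d, hs⟩ rfl
      have h2 : x ⟨(t:ℕ) + d, hs⟩ < x s := hx (by simp only [Fin.lt_def]; omega)
      omega

lemma pt_iff_count (m r : ℕ) (lo : Fin r → ℕ) (hmono : StrictMono lo)
    (hlo2 : ∀ j : Fin r, lo j ≤ m + (j:ℕ) + 1)
    (I : Finset ℕ) (hI : I ⊆ Finset.Icc 1 (m+r)) :
    IsPT r lo (fun j => m + (j:ℕ) + 1) I ↔ ∀ p, cntI I p ≤ Kc r lo p := by
  constructor
  · rintro ⟨f, hinj, hf⟩ p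
    unfold cntI Kc
    conv_lhs => rw [← Finset.card_attach]
    apply Finset.card_le_card_of_injOn
      (fun a => f ⟨a.1, (Finset.mem_filter.1 a.2).1⟩)
    · intro a _
      simp only [Finset.mem_coe, Finset.mem_filter, Finset.mem_univ, true_and]
      exact le_trans (hf ⟨a.1, (Finset.mem_filter.1 a.2).1⟩).1 (Finset.mem_filter.1 a.2).2
    · intro a _ b _ hab
      have h1 : (a.1 : ℕ) = b.1 := congrArg (fun z : {y // y ∈ I} => (z : ℕ)) (hinj hab)
      exact Subtype.ext h1
  · intro hcnt
    set k := I.card with hk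
    set e := I.orderIsoOfFin hk.symm with he
    set x : Fin k → ℕ := fun t => ((e t : I) : ℕ) with hx
    have hxm : StrictMono x := fun a b h => Subtype.coe_lt_coe.2 (e.strictMono h)
    have hxI : ∀ t, x t ∈ I := fun t => (e t).2
    have hK1 : ∀ t : Fin k, (t:ℕ) + 1 ≤ Kc r lo (x t) := by
      intro t
      refine le_trans ?_ (hcnt (x t))
      unfold cntI
      rw [← Finset.card_range ((t:ℕ)+1)]
      apply Finset.card_le_card_of_injOn
        (fun s => x ⟨min s (t:ℕ), lt_of_le_of_lt (min_le_right _ _) t.isLt⟩)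
      · intro a ha
        simp only [Finset.mem_coe, Finset.mem_range] at ha
        simp only [Finset.mem_coe, Finset.mem_filter]
        refine ⟨hxI _, ?_⟩
        apply hxm.monotone
        simp only [Fin.le_def]
        exact min_le_right _ _
      · intro a ha b hb hab
        simp only [Finset.mem_range, Finset.coe_range, Set.mem_Iio] at ha hb
        have h1 := hxm.injective hab
        have h2 : a ⊓ (t:ℕ) = b ⊓ (t:ℕ) := congrArg Fin.val h1
        omega
    have hxb : ∀ t : Fin k, x t ≤ m + Kc r lo (x t) := by
      intro t
      rcases lt_or_ge (Kc r lo (x t)) r with hr | hr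
      · have hj : ¬ ((⟨Kc r lo (x t), hr⟩ : Fin r) : ℕ) < Kc r lo (x t) := by simp
        rw [lt_Kc_iff hmono] at hj
        push_neg at hj
        have := hlo2 ⟨Kc r lo (x t), hr⟩
        simp only at this
        omega
      · have := (Finset.mem_Icc.1 (hI (hxI t))).2
        have := Kc_le r lo (x t)
        omega
    -- the matching indices
    have hne : ∀ t : Fin k, (Finset.Ici t).Nonempty := fun t => ⟨t, Finset.mem_Ici.2 le_rfl⟩
    set D : Fin k → ℕ := fun s => Kc r lo (x s) - ((s:ℕ) + 1) with hD
    set j : Fin k → ℕ := fun t => (t:ℕ) + (Finset.Ici t).inf' (hne t) D with hj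
    have hjD : ∀ t, j t ≤ (t:ℕ) + D t := fun t =>
      Nat.add_le_add_left (Finset.inf'_le D (Finset.mem_Ici.2 le_rfl)) _
    have hjK : ∀ t, j t < Kc r lo (x t) := by
      intro t
      have h1 := hjD t
      have h2 := hK1 t
      have : (t:ℕ) + D t = Kc r lo (x t) - 1 := by simp only [hD]; omega
      omega
    have hjr : ∀ t, j t < r := fun t => lt_of_lt_of_le (hjK t) (Kc_le _ _ _)
    have hjlo : ∀ t, lo ⟨j t, hjr t⟩ ≤ x t := fun t => (lt_Kc_iff hmono _ _).1 (hjK t)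
    have hjhi : ∀ t, x t ≤ m + j t + 1 := by
      intro t
      obtain ⟨s, hs, hinf⟩ := Finset.exists_mem_eq_inf' (hne t) D
      have hts' : t ≤ s := Finset.mem_Ici.1 hs
      have hts : (t:ℕ) ≤ (s:ℕ) := hts'
      have hgap : x t + ((s:ℕ) - (t:ℕ)) ≤ x s := gap x hxm _ t s (by omega)
      have hxs := hxb s
      have hKs := hK1 s
      have hDs : Kc r lo (x s) = (s:ℕ) + 1 + D s := by simp only [hD]; omega
      have : j t = (t:ℕ) + D s := by rw [hj]; simp only; rw [hinf]
      omega
    have hjmono : StrictMono j := by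
      intro a b hab
      have h1 : (Finset.Ici a).inf' (hne a) D ≤ (Finset.Ici b).inf' (hne b) D := by
        apply Finset.le_inf'
        intro s hs
        exact Finset.inf'_le D (Finset.mem_Ici.2 (le_trans hab.le (Finset.mem_Ici.1 hs)))
      have : (a:ℕ) < (b:ℕ) := hab
      simp only [hj]
      omega
    refine ⟨fun a => ⟨j (e.symm a), hjr _⟩, ?_, ?_⟩
    · intro a b hab
      have : j (e.symm a) = j (e.symm b) := congrArg Fin.val hab
      have := hjmono.injective this
      have := congrArg e this
      simpa using this
    · intro a
      have hxa : x (e.symm a) = (a : ℕ) := by simp [hx]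
      constructor
      · rw [← hxa]; exact hjlo _
      · simp only
        rw [← hxa]
        exact hjhi _


lemma Kc_eq_Ncnt (m r : ℕ) (q : ℕ → Bool) (lo : Fin r → ℕ)
    (hmono : StrictMono lo)
    (hloN : ∀ j : Fin r, lo j ∈ Finset.Icc 1 (m + r) ∧ q (lo j) = true)
    (hall : ∀ p ∈ Finset.Icc 1 (m + r), q p = true → ∃ j : Fin r, lo j = p)
    (p : ℕ) (hp : p ≤ m + r) : Kc r lo p = Ncnt q p := by
  unfold Kc Ncnt
  apply Finset.card_bij (fun j _ => lo j)
  · intro j hj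
    simp only [Finset.mem_filter, Finset.mem_univ, true_and] at hj
    have h1 := (hloN j).1
    have h2 := (hloN j).2
    simp only [Finset.mem_filter, Finset.mem_Icc]
    exact ⟨⟨(Finset.mem_Icc.1 h1).1, hj⟩, h2⟩
  · intro a _ b _ hab
    exact hmono.injective hab
  · intro b hb
    simp only [Finset.mem_filter, Finset.mem_Icc] at hb
    obtain ⟨⟨hb1, hb2⟩, hbq⟩ := hb
    obtain ⟨j, hj⟩ := hall b (Finset.mem_Icc.2 ⟨hb1, by omega⟩) hbq
    exact ⟨j, by simp only [Finset.mem_filter, Finset.mem_univ, true_and]; omega, hj⟩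



end Cat11

/-- **Generalized Catalan matroids via free extensions and isthmuses.**
Let `Q = q_1 ⋯ q_{m+r}` be a word in `{E, N}` (encoded by `q : ℕ → Bool`, `true = N`)
with `m` letters `E` and `r` letters `N`, the `j`-th `N` occurring at position `lo j`.
Then the matroid `M^{m+r}` built recursively from the empty matroid (free extension
at each `E`, adding an isthmus at each `N`) equals the generalized Catalan matroid
`M[Q]` (with lower path `E^m N^r`): both have ground set `[1, m+r]` and the
independent sets of `M^{m+r}` are exactly the partial transversals of the interval
system `N_j = [lo j, m + j]` presenting `M[Q]`. -/
theorem stmt11 (m r : ℕ) (q : ℕ → Bool) (lo : Fin r → ℕ)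
    (hmono : StrictMono lo)
    (hloN : ∀ j : Fin r, lo j ∈ Finset.Icc 1 (m + r) ∧ q (lo j) = true)
    (hall : ∀ p ∈ Finset.Icc 1 (m + r), q p = true → ∃ j : Fin r, lo j = p)
    (hm : ((Finset.Icc 1 (m + r)).filter (fun p => q p = false)).card = m) :
    ∀ I : Finset ℕ, indSeq q (m + r) I ↔
      (I ⊆ Finset.Icc 1 (m + r) ∧ IsPT r lo (fun j => m + (j : ℕ) + 1) I) := by
  intro I
  have hlo2 : ∀ j : Fin r, lo j ≤ m + (j : ℕ) + 1 := by
    intro j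
    have hmem := (hloN j).1
    have hjr : lo j ≤ m + r := (Finset.mem_Icc.1 hmem).2
    have hj1 : 1 ≤ lo j := (Finset.mem_Icc.1 hmem).1
    have hKN : Cat11.Kc r lo (lo j) = Cat11.Ncnt q (lo j) :=
      Cat11.Kc_eq_Ncnt m r q lo hmono hloN hall (lo j) hjr
    have hKle : Cat11.Kc r lo (lo j) ≤ (j:ℕ) + 1 := by
      unfold Cat11.Kc
      calc (Finset.univ.filter (fun a : Fin r => lo a ≤ lo j)).card
          ≤ (Finset.Iic j).card := by
            apply Finset.card_le_card
            intro a ha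
            simp only [Finset.mem_filter, Finset.mem_univ, true_and] at ha
            exact Finset.mem_Iic.2 (hmono.le_iff_le.1 ha)
        _ = (j:ℕ) + 1 := Fin.card_Iic j
    have hsplit : Cat11.Ncnt q (lo j) +
        ((Finset.Icc 1 (lo j)).filter (fun x => ¬ q x = true)).card = lo j := by
      unfold Cat11.Ncnt
      rw [Finset.card_filter_add_card_filter_not]
      simp [Nat.card_Icc]
    have hF : ((Finset.Icc 1 (lo j)).filter (fun x => ¬ q x = true)).card ≤ m := by
      rw [← hm]
      apply Finset.card_le_card
      intro a ha
      simp only [Finset.mem_filter, Finset.mem_Icc, Bool.not_eq_true] at ha ⊢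
      exact ⟨⟨ha.1.1, le_trans ha.1.2 hjr⟩, ha.2⟩
    omega
  rw [Cat11.indSeq_iff]
  have hbig : ∀ {p : ℕ}, I ⊆ Finset.Icc 1 (m + r) → m + r < p → Cat11.cntI I p = Cat11.cntI I (m + r) := by
    intro p h1 hp
    rw [Cat11.cntI_eq_card (fun x hx => le_trans (Finset.mem_Icc.1 (h1 hx)).2 (by omega)),
      Cat11.cntI_eq_card (fun x hx => (Finset.mem_Icc.1 (h1 hx)).2)]
  constructor
  · rintro ⟨h1, h2⟩
    refine ⟨h1, (Cat11.pt_iff_count m r lo hmono hlo2 I h1).2 ?_⟩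
    intro p
    rcases le_or_gt p (m + r) with hp | hp
    · rw [Cat11.Kc_eq_Ncnt m r q lo hmono hloN hall p hp]
      exact h2 p
    · calc Cat11.cntI I p = Cat11.cntI I (m + r) := hbig h1 hp
        _ ≤ Cat11.Ncnt q (m + r) := h2 (m + r)
        _ = Cat11.Kc r lo (m + r) :=
            (Cat11.Kc_eq_Ncnt m r q lo hmono hloN hall (m + r) le_rfl).symm
        _ ≤ Cat11.Kc r lo p := Cat11.Kc_mono r lo hp.le
  · rintro ⟨h1, hpt⟩
    refine ⟨h1, ?_⟩
    have h2 := (Cat11.pt_iff_count m r lo hmono hlo2 I h1).1 hpt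
    intro p
    rcases le_or_gt p (m + r) with hp | hp
    · rw [← Cat11.Kc_eq_Ncnt m r q lo hmono hloN hall p hp]
      exact h2 p
    · calc Cat11.cntI I p = Cat11.cntI I (m + r) := hbig h1 hp
        _ ≤ Cat11.Kc r lo (m + r) := h2 (m + r)
        _ = Cat11.Ncnt q (m + r) := Cat11.Kc_eq_Ncnt m r q lo hmono hloN hall (m + r) le_rfl
        _ ≤ Cat11.Ncnt q p := Cat11.Ncnt_mono q hp.le
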